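/- A morphism vanishes in the Verdier quotient if and only if it factors through the thick subcategory: for a morphism f : A → B in T, the image L(f) of f under the localization functor L : T ⥤ T/W is zero if and only if there exist an object E of E and morphisms g : A → E, h : E → B with f = h ∘ g. -/

import Mathlib

open CategoryTheory Category Limits Pretriangulated Triangulated

namespace CategoryTheory.Triangulated

variable {C : Type*} [Category C] [HasZeroObject C] [HasShift C ℤ]
  [Preadditive C] [∀ n : ℤ, (shiftFunctor C n).Additive] [Pretriangulated C]

variable (C) in
/-- The structure `Triangulated.Subcategory` as it stood in Mathlib (December 2024). -/
structure Subcategory where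
  P : C → Prop
  zero' : ∃ (Z : C) (_ : IsZero Z), P Z
  shift (X : C) (n : ℤ) : P X → P (X⟦n⟧)
  ext₂' (T : Triangle C) (_ : T ∈ distTriang C) : P T.obj₁ → P T.obj₃ →
    ObjectProperty.isoClosure P T.obj₂

namespace Subcategory

variable (S : Subcategory C)

instance isTriangulated_P : ObjectProperty.IsTriangulated S.P where
  exists_zero := by
    obtain ⟨Z, hZ, h⟩ := S.zero'
    exact ⟨Z, hZ, h⟩
  isStableUnderShiftBy a := ⟨fun X hX => S.shift X a hX⟩
  ext₂' := S.ext₂'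

/-- The class of morphisms whose cone satisfies `S.P` (old `Subcategory.W`). -/
def W : MorphismProperty C := ObjectProperty.trW S.P

instance instHasLeftCalculusOfFractionsW [IsTriangulated C] :
    S.W.HasLeftCalculusOfFractions := by
  unfold W
  infer_instance

end Subcategory

end CategoryTheory.Triangulated

/-- **A morphism vanishes in the Verdier quotient if and only if it factors
through the thick subcategory.**  For a morphism `f : A ⟶ B` in a triangulated
category `T` with thick subcategory `E`, the image of `f` under the
localization functor `L = E.W.Q : T ⥤ T/W` at the class `W` of `E`-weak
equivalences is zero if and only if there are an object `X` of `E` and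
morphisms `g : A ⟶ X`, `h : X ⟶ B` with `f = g ≫ h`. -/
theorem map_eq_zero_iff_factors {T : Type*} [Category T] [HasZeroObject T] [Preadditive T]
    [HasShift T ℤ] [∀ n : ℤ, (shiftFunctor T n).Additive] [Pretriangulated T]
    [IsTriangulated T] (E : Triangulated.Subcategory T) [ObjectProperty.IsClosedUnderIsomorphisms E.P]
    (hthick : ∀ ⦃X Y : T⦄ (i : X ⟶ Y) (r : Y ⟶ X), i ≫ r = 𝟙 X → E.P Y → E.P X)
    {A B : T} (f : A ⟶ B) :
    E.W.Q.map f = 0 ↔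
      ∃ (X : T) (_ : E.P X) (g : A ⟶ X) (h : X ⟶ B), f = g ≫ h := by
  constructor
  · intro h
    have h' : E.W.Q.map f = E.W.Q.map (0 : A ⟶ B) := by simpa using h
    rw [MorphismProperty.map_eq_iff_postcomp E.W.Q E.W] at h'
    obtain ⟨Z, s, hs, fac⟩ := h'
    rw [zero_comp] at fac
    rw [Subcategory.W, ObjectProperty.trW_iff'] at hs
    obtain ⟨X, i, w, H, mem⟩ := hs
    obtain ⟨g, hg⟩ := Triangle.coyoneda_exact₂ _ H f fac
    exact ⟨X, mem, g, i, hg⟩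
  · rintro ⟨X, hX, g, h, rfl⟩
    obtain ⟨Z, s, w, H⟩ := distinguished_cocone_triangle h
    have hs : E.W s := ObjectProperty.trW.mk' E.P H hX
    have : E.W.Q.map (g ≫ h) = E.W.Q.map (0 : A ⟶ B) := by
      rw [MorphismProperty.map_eq_iff_postcomp E.W.Q E.W]
      refine ⟨Z, s, hs, ?_⟩
      have := comp_distTriang_mor_zero₁₂ _ H
      change h ≫ s = 0 at this
      rw [assoc, this, comp_zero, zero_comp]
    simpa using this
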